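/- Let F be a field, let r ≤ u be positive integers, and let A ∈ F^{r×u}. If the r × (r + u) matrix [I | A], obtained by appending the r × r identity matrix to A, is an MDS matrix, then A is totally nonsingular: every square submatrix of A, of any size k with 1 ≤ k ≤ r, obtained by choosing any k rows and any k columns of A, is nonsingular. -/

import Mathlib

/-- A matrix is totally nonsingular if every square submatrix (given by injections
selecting rows and columns) is nonsingular. -/
def IsTotallyNonsingular {F : Type*} [Field F] {r u : ℕ}
    (A : Matrix (Fin r) (Fin u) F) : Prop :=
  ∀ (k : ℕ), 1 ≤ k → ∀ (ρ : Fin k → Fin r) (σ : Fin k → Fin u),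
    Function.Injective ρ → Function.Injective σ →
      (Matrix.of fun p q : Fin k => A (ρ p) (σ q)).det ≠ 0

/-- A matrix G with r rows (and columns indexed by an arbitrary type) is MDS if every
r × r submatrix formed by selecting any r distinct columns is nonsingular. -/
def IsMDS {F : Type*} [Field F] {r : ℕ} {n : Type*}
    (G : Matrix (Fin r) n F) : Prop :=
  ∀ σ : Fin r → n, Function.Injective σ →
    (Matrix.of fun p q : Fin r => G p (σ q)).det ≠ 0

/-- Let r ≤ u be positive integers and A ∈ F^{r×u}.  If the r × (r + u)
matrix [I | A] is an MDS matrix, then A is totally nonsingular. -/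
theorem stmt_9 {F : Type*} [Field F] {r u : ℕ}
    (hr : 0 < r) (hu : 0 < u) (hru : r ≤ u)
    (A : Matrix (Fin r) (Fin u) F)
    (hA : IsMDS (Matrix.fromCols (1 : Matrix (Fin r) (Fin r) F) A)) :
    IsTotallyNonsingular A := by
  intro k hk ρ σ hρ hσ
  set G := Matrix.fromCols (1 : Matrix (Fin r) (Fin r) F) A with hG
  -- complement of the range of ρ
  set s : Finset (Fin r) := (Finset.univ.image ρ)ᶜ with hs
  have hkr : k ≤ r := by simpa using Fintype.card_le_of_injective ρ hρ
  have hcard : s.card = r - k := by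
    simp [hs, Finset.card_compl, Finset.card_image_of_injective _ hρ]
  -- enumerate the complement
  set τ : Fin (r - k) → Fin r := fun i => (s.orderIsoOfFin hcard i : Fin r) with hτ
  have hτinj : Function.Injective τ := fun a b hab => by
    simpa using (s.orderIsoOfFin hcard).injective (Subtype.ext hab)
  have hτmem : ∀ i, τ i ∈ s := fun i => (s.orderIsoOfFin hcard i).2
  have hdisj : ∀ p q, ρ p ≠ τ q := by
    intro p q h
    have := hτmem q
    rw [← h] at this
    simp [hs] at this
  -- the row bijection
  have helim_inj : Function.Injective (Sum.elim ρ τ) := by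
    intro a b hab
    cases a with
    | inl a => cases b with
      | inl b => exact congrArg Sum.inl (hρ hab)
      | inr b => exact absurd hab (hdisj a b)
    | inr a => cases b with
      | inl b => exact absurd hab.symm (hdisj b a)
      | inr b => exact congrArg Sum.inr (hτinj hab)
  have hbij : Function.Bijective (Sum.elim ρ τ) := by
    rw [Fintype.bijective_iff_injective_and_card]
    refine ⟨helim_inj, ?_⟩
    simp [Nat.add_sub_cancel' hkr]
  set g : (Fin k ⊕ Fin (r - k)) ≃ Fin r := Equiv.ofBijective _ hbij with hg
  -- the column selection
  set c : Fin r → (Fin r ⊕ Fin u) :=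
    (Sum.elim (Sum.inr ∘ σ) (Sum.inl ∘ τ)) ∘ g.symm with hc
  have hcinj : Function.Injective c := by
    apply Function.Injective.comp _ g.symm.injective
    intro a b hab
    cases a with
    | inl a => cases b with
      | inl b => exact congrArg Sum.inl (hσ (Sum.inr.inj hab))
      | inr b => exact absurd hab (by simp)
    | inr a => cases b with
      | inl b => exact absurd hab (by simp)
      | inr b => exact congrArg Sum.inr (hτinj (Sum.inl.inj hab))
  have hdet := hA c hcinj
  set B : Matrix (Fin k) (Fin k) F := Matrix.of fun p q => A (ρ p) (σ q) with hB
  set C : Matrix (Fin (r - k)) (Fin k) F := Matrix.of fun p q => A (τ p) (σ q) with hC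
  -- the big submatrix as a block matrix
  have key : (Matrix.of fun p q : Fin r => G p (c q)) =
      (Matrix.fromBlocks B 0 C (1 : Matrix (Fin (r - k)) (Fin (r - k)) F)).submatrix
        g.symm g.symm := by
    ext p q
    have hp := g.apply_symm_apply p
    have hq := g.apply_symm_apply q
    simp only [Matrix.submatrix_apply, Matrix.of_apply]
    rcases hps : g.symm p with a | a <;> rcases hqs : g.symm q with b | b <;>
      rw [hps] at hp <;> rw [hqs] at hq <;>
      simp only [hg, Equiv.ofBijective_apply, Sum.elim_inl, Sum.elim_inr] at hp hq <;>
      simp only [hc, Function.comp_apply, hps, hqs, Sum.elim_inl, Sum.elim_inr,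
        Function.comp_apply, hG, Matrix.fromCols, Matrix.of_apply, Sum.elim_inl,
        Sum.elim_inr, Matrix.fromBlocks_apply₁₁, Matrix.fromBlocks_apply₁₂,
        Matrix.fromBlocks_apply₂₁, Matrix.fromBlocks_apply₂₂, hB, hC, ← hp]
    · exact Matrix.one_apply_ne (hdisj a b)
    · rw [Matrix.one_apply, Matrix.one_apply]
      by_cases hab : a = b
      · simp [hab]
      · rw [if_neg hab, if_neg fun h => hab (hτinj h)]
  rw [key, Matrix.det_submatrix_equiv_self, Matrix.det_fromBlocks_zero₁₂,
    Matrix.det_one, mul_one] at hdet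
  exact hdet
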